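/- (Non-falsifiability of concavity.) If some strictly increasing utility u : ℝ^m_{≥0} → ℝ rationalizes the dataset {(α_t, β_t) : t = 1,…,K}, then there also exists a strictly increasing, continuous, and concave utility (a pointwise minimum of finitely many affine functions) that rationalizes the same dataset. -/

import Mathlib

/-- Euclidean inner product on `Fin m → ℝ`. -/
noncomputable def ip {m : ℕ} (x y : Fin m → ℝ) : ℝ := ∑ i, x i * y i

lemma ip_smul {m : ℕ} (lam : ℝ) (a x : Fin m → ℝ) :
    ip (fun i => lam * a i) x = lam * ip a x := by
  simp [ip, Finset.mul_sum, mul_assoc]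

lemma ip_lin {m : ℕ} (a x y : Fin m → ℝ) (p q : ℝ) :
    ip a (p • x + q • y) = p * ip a x + q * ip a y := by
  simp only [ip, Finset.mul_sum, ← Finset.sum_add_distrib, Pi.add_apply, Pi.smul_apply,
    smul_eq_mul]
  exact Finset.sum_congr rfl (fun i _ => by ring)

lemma ip_mono_strict {m : ℕ} (a x y : Fin m → ℝ) (ha : ∀ i, 0 < a i)
    (hxy : ∀ i, x i ≤ y i) (hne : x ≠ y) : ip a x < ip a y := by
  obtain ⟨i, hi⟩ := Function.ne_iff.mp hne
  refine Finset.sum_lt_sum (fun j _ => by have := hxy j; nlinarith [(ha j).le]) ⟨i, Finset.mem_univ i, ?_⟩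
  have hlt : x i < y i := lt_of_le_of_ne (hxy i) hi
  nlinarith [ha i]

lemma ip_continuous {m : ℕ} (a : Fin m → ℝ) : Continuous (fun x => ip a x) := by
  unfold ip
  exact continuous_finset_sum _ fun i _ => continuous_const.mul (continuous_apply i)

/-- Properties of a min of affine functions with positive coefficients. -/
lemma aux_min_affine {m n : ℕ} (hn : 0 < n) (c : Fin n → ℝ) (a : Fin n → Fin m → ℝ)
    (ha : ∀ t i, 0 < a t i) :
    (∀ x y : Fin m → ℝ, (∀ i, 0 ≤ x i) → (∀ i, x i ≤ y i) → x ≠ y →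
      Finset.univ.inf' (Finset.univ_nonempty_iff.mpr ⟨⟨0, hn⟩⟩)
        (fun t : Fin n => c t + ip (a t) x) <
      Finset.univ.inf' (Finset.univ_nonempty_iff.mpr ⟨⟨0, hn⟩⟩)
        (fun t : Fin n => c t + ip (a t) y)) ∧
    Continuous (fun x => Finset.univ.inf' (Finset.univ_nonempty_iff.mpr ⟨⟨0, hn⟩⟩)
        (fun t : Fin n => c t + ip (a t) x)) ∧
    ConcaveOn ℝ {x : Fin m → ℝ | ∀ i, 0 ≤ x i}
      (fun x => Finset.univ.inf' (Finset.univ_nonempty_iff.mpr ⟨⟨0, hn⟩⟩)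
        (fun t : Fin n => c t + ip (a t) x)) := by
  have hne : (Finset.univ : Finset (Fin n)).Nonempty :=
    Finset.univ_nonempty_iff.mpr ⟨⟨0, hn⟩⟩
  refine ⟨?_, ?_, ?_⟩
  · intro x y _ hxy hxyne
    obtain ⟨t0, _, ht0⟩ := Finset.exists_mem_eq_inf' hne (fun t : Fin n => c t + ip (a t) y)
    rw [ht0]
    calc Finset.univ.inf' hne (fun t : Fin n => c t + ip (a t) x)
        ≤ c t0 + ip (a t0) x := Finset.inf'_le _ (Finset.mem_univ t0)
      _ < c t0 + ip (a t0) y := by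
          have := ip_mono_strict (a t0) x y (ha t0) hxy hxyne; linarith
  · exact Continuous.finset_inf'_apply hne fun t _ =>
      continuous_const.add (ip_continuous (a t))
  · constructor
    · intro x hx y hy p q hp hq hpq i
      simp only [Pi.add_apply, Pi.smul_apply, smul_eq_mul]
      exact add_nonneg (mul_nonneg hp (hx i)) (mul_nonneg hq (hy i))
    · intro x _ y _ p q hp hq hpq
      obtain ⟨t0, _, ht0⟩ := Finset.exists_mem_eq_inf' hne
        (fun t : Fin n => c t + ip (a t) (p • x + q • y))
      beta_reduce
      rw [ht0]
      have hx' : Finset.univ.inf' hne (fun t : Fin n => c t + ip (a t) x)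
          ≤ c t0 + ip (a t0) x := Finset.inf'_le _ (Finset.mem_univ t0)
      have hy' : Finset.univ.inf' hne (fun t : Fin n => c t + ip (a t) y)
          ≤ c t0 + ip (a t0) y := Finset.inf'_le _ (Finset.mem_univ t0)
      have hlin := ip_lin (a t0) x y p q
      have hcomb : p * (c t0 + ip (a t0) x) + q * (c t0 + ip (a t0) y)
          = c t0 + ip (a t0) (p • x + q • y) := by
        rw [hlin]; linear_combination (c t0) * hpq
      simp only [smul_eq_mul]
      linarith [mul_le_mul_of_nonneg_left hx' hp, mul_le_mul_of_nonneg_left hy' hq]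

theorem stmt_15 {m K : ℕ} (α β : ℕ → Fin m → ℝ)
    (hα : ∀ t < K, ∀ i, 0 < α t i) (hβ : ∀ t < K, ∀ i, 0 ≤ β t i)
    (u : (Fin m → ℝ) → ℝ)
    (hmono : ∀ x y : Fin m → ℝ, (∀ i, 0 ≤ x i) → (∀ i, x i ≤ y i) → x ≠ y → u x < u y)
    (hrat : ∀ t < K, ∀ γ : Fin m → ℝ, (∀ i, 0 ≤ γ i) →
      ip (α t) γ ≤ ip (α t) (β t) → u γ ≤ u (β t)) :
    ∃ v : (Fin m → ℝ) → ℝ,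
      (∃ (n : ℕ) (hn : 0 < n) (c : Fin n → ℝ) (a : Fin n → Fin m → ℝ),
        ∀ x, v x = Finset.univ.inf' (Finset.univ_nonempty_iff.mpr
          ⟨⟨0, hn⟩⟩) (fun t : Fin n => c t + ip (a t) x)) ∧
      (∀ x y : Fin m → ℝ, (∀ i, 0 ≤ x i) → (∀ i, x i ≤ y i) → x ≠ y → v x < v y) ∧
      ContinuousOn v {x : Fin m → ℝ | ∀ i, 0 ≤ x i} ∧
      ConcaveOn ℝ {x : Fin m → ℝ | ∀ i, 0 ≤ x i} v ∧
      (∀ t < K, ∀ γ : Fin m → ℝ, (∀ i, 0 ≤ γ i) →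
        ip (α t) γ ≤ ip (α t) (β t) → v γ ≤ v (β t)) := by
  rcases Nat.eq_zero_or_pos K with hK | hK
  · -- K = 0 : take a single affine function
    subst hK
    obtain ⟨h1, h2, h3⟩ := aux_min_affine (m := m) one_pos (fun _ => 0)
      (fun _ => fun _ => (1 : ℝ)) (fun _ _ => one_pos)
    exact ⟨_, ⟨1, one_pos, fun _ => 0, fun _ => fun _ => 1, fun x => rfl⟩,
      h1, h2.continuousOn, h3, fun t ht => absurd ht (Nat.not_lt_zero t)⟩
  · -- main case
    -- strict revealed preference
    have L1 : ∀ t < K, ∀ s : Fin m → ℝ, (∀ i, 0 ≤ s i) →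
        ip (α t) s < ip (α t) (β t) → u s < u (β t) := by
      intro t ht s hs h
      rcases Nat.eq_zero_or_pos m with hm | hm
      · exfalso; subst hm; simp [ip] at h
      have hS : 0 < ∑ i, α t i :=
        Finset.sum_pos (fun i _ => hα t ht i) (Finset.univ_nonempty_iff.mpr ⟨⟨0, hm⟩⟩)
      set ε := (ip (α t) (β t) - ip (α t) s) / (∑ i, α t i) with hε
      have hε0 : 0 < ε := div_pos (by linarith) hS
      set γ := fun i : Fin m => s i + ε with hγ
      have hγ0 : ∀ i, 0 ≤ γ i := fun i => by have := hs i; simp [hγ]; linarith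
      have hle : ∀ i, s i ≤ γ i := fun i => by simp [hγ]; linarith
      have hne : s ≠ γ := by
        intro hcontra
        have := congrFun hcontra ⟨0, hm⟩
        simp [hγ] at this; linarith
      have hipγ : ip (α t) γ = ip (α t) s + ε * ∑ i, α t i := by
        simp [ip, hγ, mul_add, Finset.sum_add_distrib, Finset.sum_mul, mul_comm]
      have hbudget : ip (α t) γ ≤ ip (α t) (β t) := by
        rw [hipγ, hε]; rw [div_mul_cancel₀ _ (ne_of_gt hS)]; linarith
      exact lt_of_lt_of_le (hmono s γ hs hle hne) (hrat t ht γ hγ0 hbudget)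
    have L2 : ∀ t < K, ∀ s < K, ip (α t) (β s) ≤ ip (α t) (β t) → u (β s) ≤ u (β t) :=
      fun t ht s hs h => hrat t ht (β s) (hβ s hs) h
    -- bound B
    set B : ℝ := 1 + ∑ t ∈ Finset.range K, ∑ s ∈ Finset.range K,
        |ip (α t) (β t) - ip (α t) (β s)| with hB
    have hB1 : (1 : ℝ) ≤ B := by
      have : 0 ≤ ∑ t ∈ Finset.range K, ∑ s ∈ Finset.range K,
          |ip (α t) (β t) - ip (α t) (β s)| :=
        Finset.sum_nonneg fun t _ => Finset.sum_nonneg fun s _ => abs_nonneg _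
      linarith
    have hBle : ∀ t < K, ∀ s < K, ip (α t) (β t) - ip (α t) (β s) ≤ B := by
      intro t ht s hs
      have h1 : |ip (α t) (β t) - ip (α t) (β s)| ≤
          ∑ s ∈ Finset.range K, |ip (α t) (β t) - ip (α t) (β s)| :=
        Finset.single_le_sum (f := fun s => |ip (α t) (β t) - ip (α t) (β s)|)
          (fun i _ => abs_nonneg _) (Finset.mem_range.mpr hs)
      have h2 : ∑ s ∈ Finset.range K, |ip (α t) (β t) - ip (α t) (β s)| ≤
          ∑ t ∈ Finset.range K, ∑ s ∈ Finset.range K, |ip (α t) (β t) - ip (α t) (β s)| :=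
        Finset.single_le_sum
          (f := fun t => ∑ s ∈ Finset.range K, |ip (α t) (β t) - ip (α t) (β s)|)
          (fun i _ => Finset.sum_nonneg fun s _ => abs_nonneg _)
          (Finset.mem_range.mpr ht)
      have := le_abs_self (ip (α t) (β t) - ip (α t) (β s))
      linarith
    -- gap D
    obtain ⟨D, hD0, hDle⟩ : ∃ D : ℝ, 0 < D ∧ ∀ t < K, ∀ s < K,
        u (β t) < u (β s) → D ≤ ip (α t) (β s) - ip (α t) (β t) := by
      set P := (Finset.range K ×ˢ Finset.range K).filter
        (fun p : ℕ × ℕ => u (β p.1) < u (β p.2)) with hP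
      rcases P.eq_empty_or_nonempty with hPe | hPne
      · refine ⟨1, one_pos, fun t ht s hs h => absurd ?_ (Finset.notMem_empty (t, s))⟩
        rw [← hPe, hP]
        simp only [Finset.mem_filter, Finset.mem_product, Finset.mem_range]
        exact ⟨⟨ht, hs⟩, h⟩
      · have hpos : ∀ p ∈ P, 0 < ip (α p.1) (β p.2) - ip (α p.1) (β p.1) := by
          intro p hp
          obtain ⟨hmem, hu⟩ := Finset.mem_filter.mp hp
          obtain ⟨h1, h2⟩ := Finset.mem_product.mp hmem
          rw [Finset.mem_range] at h1 h2
          by_contra hcon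
          push_neg at hcon
          exact absurd (L2 p.1 h1 p.2 h2 (by linarith)) (not_le.mpr hu)
        refine ⟨P.inf' hPne (fun p => ip (α p.1) (β p.2) - ip (α p.1) (β p.1)), ?_, ?_⟩
        · exact (Finset.lt_inf'_iff hPne).mpr hpos
        · intro t ht s hs h
          exact Finset.inf'_le _ (show (t, s) ∈ P from by
            simp only [hP, Finset.mem_filter, Finset.mem_product, Finset.mem_range]
            exact ⟨⟨ht, hs⟩, h⟩)
    set C : ℝ := B / D with hC
    have hC0 : 0 < C := div_pos (by linarith) hD0
    have h1C : (1 : ℝ) ≤ 1 + C := by linarith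
    -- rank function
    set k : ℕ → ℕ := fun t => ((Finset.range K).filter (fun s => u (β t) < u (β s))).card
      with hk
    set U : ℕ → ℝ := fun t => 1 - (1 + C) ^ (k t) with hU
    set lam : ℕ → ℝ := fun t => (1 + C) ^ (k t) / D with hlam
    have hlam0 : ∀ t, 0 < lam t := fun t => div_pos (pow_pos (by linarith) _) hD0
    -- rank facts
    have hkmono : ∀ t < K, ∀ s < K, u (β t) < u (β s) → k s < k t := by
      intro t ht s hs h
      apply Finset.card_lt_card
      constructor
      · intro r hr
        obtain ⟨hr1, hr2⟩ := Finset.mem_filter.mp hr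
        exact Finset.mem_filter.mpr ⟨hr1, lt_trans h hr2⟩
      · intro hcon
        have hsin : s ∈ (Finset.range K).filter (fun r => u (β t) < u (β r)) :=
          Finset.mem_filter.mpr ⟨Finset.mem_range.mpr hs, h⟩
        have := Finset.mem_filter.mp (hcon hsin)
        exact absurd this.2 (lt_irrefl _)
    have hkeq : ∀ t s, u (β t) = u (β s) → k t = k s := by
      intro t s h
      simp only [hk]
      congr 1
      exact Finset.filter_congr (fun r _ => by rw [h])
    -- Afriat inequalities
    have afriat : ∀ t < K, ∀ s < K,
        U s ≤ U t + lam t * (ip (α t) (β s) - ip (α t) (β t)) := by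
      intro t ht s hs
      rcases lt_trichotomy (u (β s)) (u (β t)) with hc | hc | hc
      · -- u (β s) < u (β t) : k t < k s
        have hks : k t + 1 ≤ k s := hkmono s hs t ht hc
        have hpow : (1 + C) ^ (k t) * (1 + C) ≤ (1 + C) ^ (k s) := by
          calc (1 + C) ^ (k t) * (1 + C) = (1 + C) ^ (k t + 1) := by ring
            _ ≤ (1 + C) ^ (k s) := pow_le_pow_right₀ h1C hks
        have hXB : ip (α t) (β t) - ip (α t) (β s) ≤ B := hBle t ht s hs
        have hlampos := hlam0 t
        have hDB : lam t * B = C * (1 + C) ^ (k t) := by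
          simp only [hlam]; rw [hC]; ring
        have hmul : lam t * (ip (α t) (β t) - ip (α t) (β s)) ≤ lam t * B :=
          mul_le_mul_of_nonneg_left hXB hlampos.le
        have hUU : C * (1 + C) ^ (k t) ≤ U t - U s := by simp only [hU]; nlinarith
        nlinarith
      · -- equal utilities
        have hkk : k s = k t := hkeq s t hc
        have hXpos : 0 ≤ ip (α t) (β s) - ip (α t) (β t) := by
          by_contra hcon
          push_neg at hcon
          exact absurd (L1 t ht (β s) (hβ s hs) (by linarith)) (not_lt.mpr hc.symm.le)
        have : 0 ≤ lam t * (ip (α t) (β s) - ip (α t) (β t)) :=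
          mul_nonneg (hlam0 t).le hXpos
        simp only [hU, hkk]; linarith
      · -- u (β t) < u (β s)
        have hD' : D ≤ ip (α t) (β s) - ip (α t) (β t) := hDle t ht s hs hc
        have hUs : U s ≤ U t + (1 + C) ^ (k t) - 1 := by
          simp only [hU]
          have h1 : (1:ℝ) ≤ (1 + C) ^ (k s) := one_le_pow₀ h1C
          linarith
        have : (1 + C) ^ (k t) = lam t * D := by
          simp only [hlam]; field_simp
        have hge : (1 + C) ^ (k t) ≤ lam t * (ip (α t) (β s) - ip (α t) (β t)) := by
          rw [this]
          exact mul_le_mul_of_nonneg_left hD' (hlam0 t).le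
        linarith
    -- the utility
    set c : Fin K → ℝ := fun t => U t - lam t * ip (α t) (β t) with hc
    set a : Fin K → Fin m → ℝ := fun t => fun i => lam t * α t i with ha
    have hapos : ∀ t : Fin K, ∀ i, 0 < a t i :=
      fun t i => mul_pos (hlam0 t) (hα t t.isLt i)
    obtain ⟨h1, h2, h3⟩ := aux_min_affine hK c a hapos
    have hne : (Finset.univ : Finset (Fin K)).Nonempty :=
      Finset.univ_nonempty_iff.mpr ⟨⟨0, hK⟩⟩
    set v : (Fin m → ℝ) → ℝ := fun x =>
      Finset.univ.inf' hne (fun t : Fin K => c t + ip (a t) x) with hv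
    have hpiece : ∀ (t : Fin K) (x : Fin m → ℝ),
        c t + ip (a t) x = U t + lam t * (ip (α t) x - ip (α t) (β t)) := by
      intro t x
      simp only [hc, ha]
      rw [ip_smul]
      ring
    refine ⟨v, ⟨K, hK, c, a, fun x => rfl⟩, h1, h2.continuousOn, h3, ?_⟩
    intro t ht γ hγ hbud
    have hvγ : v γ ≤ U t := by
      calc v γ ≤ c ⟨t, ht⟩ + ip (a ⟨t, ht⟩) γ := Finset.inf'_le _ (Finset.mem_univ _)
        _ = U t + lam t * (ip (α t) γ - ip (α t) (β t)) := hpiece ⟨t, ht⟩ γ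
        _ ≤ U t := by nlinarith [hlam0 t]
    have hvβ : U t ≤ v (β t) := by
      apply Finset.le_inf'
      intro s _
      rw [hpiece s (β t)]
      exact afriat s s.isLt t ht
    linarith
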